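/- Let ρ_W(p) = (1−p)·I₄/4 + p·|φ⟩⟨φ| be the two-qubit Werner state, where |φ⟩ = (|00⟩ + |11⟩)/√2 and p ∈ [0,1]. Then the equation tr(ρ_W(p)²) = tr((tr_B ρ_W(p))²) + 4·√(det ρ_W(p)) holds if and only if p = 2/3; moreover, ρ_W(p) admits a symmetric extension if and only if p ≤ 2/3. -/

import Mathlib

open Matrix Kronecker Complex
open scoped ComplexOrder

abbrev Q2 : Type := Fin 2 × Fin 2
abbrev Q3 : Type := Fin 2 × Fin 2 × Fin 2

noncomputable section

/-- A two-qubit state: positive semidefinite with trace one. -/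
def IsState2 (ρ : Matrix Q2 Q2 ℂ) : Prop := ρ.PosSemidef ∧ ρ.trace = 1

/-- A three-qubit state: positive semidefinite with trace one. -/
def IsState3 (ρ : Matrix Q3 Q3 ℂ) : Prop := ρ.PosSemidef ∧ ρ.trace = 1

/-- Partial trace over the first qubit (system A) of a two-qubit operator. -/
def ptraceA (ρ : Matrix Q2 Q2 ℂ) : Matrix (Fin 2) (Fin 2) ℂ :=
  Matrix.of fun b b' => ∑ a, ρ (a, b) (a, b')

/-- Partial trace over the middle qubit (system B) of a three-qubit operator;
the result is indexed by the systems (A, B'). -/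
def ptraceB3 (ρ : Matrix Q3 Q3 ℂ) : Matrix Q2 Q2 ℂ :=
  Matrix.of fun p q => ∑ b, ρ (p.1, b, p.2) (q.1, b, q.2)

/-- Partial trace over the last qubit (system B') of a three-qubit operator;
the result is indexed by the systems (A, B). -/
def ptraceB'3 (ρ : Matrix Q3 Q3 ℂ) : Matrix Q2 Q2 ℂ :=
  Matrix.of fun p q => ∑ c, ρ (p.1, p.2, c) (q.1, q.2, c)

/-- A two-qubit state admits a symmetric extension if there is a three-qubit state whose
AB and AB' marginals both equal it. -/
def SymExt (ρ : Matrix Q2 Q2 ℂ) : Prop :=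
  ∃ τ : Matrix Q3 Q3 ℂ, IsState3 τ ∧ ptraceB'3 τ = ρ ∧ ptraceB3 τ = ρ

/-- f(ρ) = tr(ρ_B²) − tr(ρ²) + 4√(det ρ). -/
def fC (ρ : Matrix Q2 Q2 ℂ) : ℝ :=
  ((ptraceA ρ * ptraceA ρ).trace).re - ((ρ * ρ).trace).re + 4 * Real.sqrt ρ.det.re

/-- The rank-one projector |ψ⟩⟨ψ|. -/
def proj {n : Type*} (ψ : n → ℂ) : Matrix n n ℂ := Matrix.vecMulVec ψ (star ψ)

/-- A two-qubit state admits a pure symmetric extension. -/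
def PureSymExt (ρ : Matrix Q2 Q2 ℂ) : Prop :=
  ∃ ψ : Q3 → ℂ, (∑ x, Complex.normSq (ψ x)) = 1 ∧
    ptraceB'3 (proj ψ) = ρ ∧ ptraceB3 (proj ψ) = ρ

/-- The multiset of nonzero eigenvalues (with multiplicity) of a complex matrix. -/
def nonzeroSpec {n : Type*} [Fintype n] [DecidableEq n] (M : Matrix n n ℂ) : Multiset ℂ :=
  M.charpoly.roots.filter (· ≠ 0)

/-- The trace norm ‖X‖_tr = tr √(X†X) of a 2×2 complex matrix. -/
def trNorm (X : Matrix (Fin 2) (Fin 2) ℂ) : ℝ :=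
  (((Matrix.posSemidef_conjTranspose_mul_self X).1.eigenvectorUnitary.1 *
      diagonal (((↑) : ℝ → ℂ) ∘ (√·) ∘ (Matrix.posSemidef_conjTranspose_mul_self X).1.eigenvalues) *
      (star (Matrix.posSemidef_conjTranspose_mul_self X).1.eigenvectorUnitary :
        Matrix (Fin 2) (Fin 2) ℂ)).trace).re

/-- The supporting-hyperplane observable H_AB(σ) = √(det σ)·σ⁻¹ − σ + I₂⊗σ_B. -/
def HAB (σ : Matrix Q2 Q2 ℂ) : Matrix Q2 Q2 ℂ :=
  ((Real.sqrt σ.det.re : ℝ) : ℂ) • σ⁻¹ - σ + (1 : Matrix (Fin 2) (Fin 2) ℂ) ⊗ₖ ptraceA σ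

/-- The Bell state (|00⟩ + |11⟩)/√2. -/
def phiBell : Q2 → ℂ := fun p => if p.1 = p.2 then (((Real.sqrt 2)⁻¹ : ℝ) : ℂ) else 0

/-- The two-qubit Werner state ρ_W(p) = (1−p)·I/4 + p·|φ⟩⟨φ|. -/
def werner (p : ℝ) : Matrix Q2 Q2 ℂ :=
  (((1 - p) / 4 : ℝ) : ℂ) • (1 : Matrix Q2 Q2 ℂ) + (p : ℂ) • proj phiBell

/-- Partial trace over the second qubit (system B) of a two-qubit operator. -/
def ptraceB2 (ρ : Matrix Q2 Q2 ℂ) : Matrix (Fin 2) (Fin 2) ℂ :=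
  Matrix.of fun a a' => ∑ b, ρ (a, b) (a', b)

/-! ### Auxiliary lemmas -/

lemma projPhi : proj phiBell = Matrix.of
    (fun x y : Q2 => if x.1 = x.2 ∧ y.1 = y.2 then (1/2 : ℂ) else 0) := by
  ext x y
  simp only [proj, vecMulVec_apply, phiBell, Pi.star_apply, Matrix.of_apply]
  rcases x with ⟨a, b⟩; rcases y with ⟨c, d⟩
  by_cases h1 : a = b <;> by_cases h2 : c = d <;>
    simp only [h1, h2, if_true, if_false, and_true, and_false, false_and, if_neg, ite_true,
      ite_false, star_zero, mul_zero, zero_mul, if_pos]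
  all_goals
    try { rw [RCLike.star_def, Complex.conj_ofReal, ← Complex.ofReal_mul,
      ← mul_inv, Real.mul_self_sqrt (by norm_num)]; norm_num }

lemma werner_apply (p : ℝ) (x y : Q2) : werner p x y =
    (if x = y then (((1 - p) / 4 : ℝ) : ℂ) else 0) +
      (if x.1 = x.2 ∧ y.1 = y.2 then (p / 2 : ℂ) else 0) := by
  simp only [werner, projPhi, Matrix.add_apply, Matrix.smul_apply, Matrix.one_apply,
    Matrix.of_apply, smul_eq_mul]
  split_ifs <;> simp <;> ring

lemma proj_psd {n : Type*} [Fintype n] [DecidableEq n] (ψ : n → ℂ) : (proj ψ).PosSemidef := by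
  rw [proj, vecMulVec_eq Unit, ← conjTranspose_replicateCol]
  exact posSemidef_self_mul_conjTranspose _

lemma smul_psd {n : Type*} [Fintype n] {r : ℝ} (hr : 0 ≤ r) {M : Matrix n n ℂ}
    (hM : M.PosSemidef) : ((r : ℂ) • M).PosSemidef := by
  refine .of_dotProduct_mulVec_nonneg ?_ (fun x => ?_)
  · unfold Matrix.IsHermitian
    rw [conjTranspose_smul, hM.1, RCLike.star_def, Complex.conj_ofReal]
  · rw [smul_mulVec, dotProduct_smul, smul_eq_mul]
    exact mul_nonneg (Complex.zero_le_real.mpr hr) (hM.dotProduct_mulVec_nonneg x)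

/-! Part 1 computations -/

lemma trace_werner_sq (p : ℝ) : ((werner p * werner p).trace) = (((1 + 3*p^2)/4 : ℝ) : ℂ) := by
  simp only [Matrix.trace, Matrix.diag, Matrix.mul_apply, Fintype.sum_prod_type,
    Fin.sum_univ_two, werner_apply]
  norm_num
  push_cast
  ring

lemma ptraceB2_werner (p : ℝ) : ptraceB2 (werner p) = ((1/2 : ℝ) : ℂ) • 1 := by
  ext a b
  simp only [ptraceB2, Matrix.of_apply, Fin.sum_univ_two, werner_apply, Matrix.smul_apply,
    Matrix.one_apply, smul_eq_mul]
  fin_cases a <;> fin_cases b <;> norm_num [Prod.ext_iff] <;> push_cast <;> ring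

lemma trace_ptrB2_sq (p : ℝ) :
    ((ptraceB2 (werner p) * ptraceB2 (werner p)).trace) = ((1/2 : ℝ) : ℂ) := by
  rw [ptraceB2_werner]
  simp only [Matrix.trace, Matrix.diag, Matrix.mul_apply, Fin.sum_univ_two, Matrix.smul_apply,
    Matrix.one_apply, smul_eq_mul]
  norm_num

lemma det_werner (p : ℝ) : (werner p).det = ((((1-p)^3*(1+3*p))/256 : ℝ) : ℂ) := by
  have h : (werner p).det = (Matrix.reindex finProdFinEquiv finProdFinEquiv (werner p)).det :=
    (Matrix.det_reindex_self _ _).symm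
  rw [h]
  rw [show (Matrix.reindex finProdFinEquiv finProdFinEquiv (werner p)) =
    !![(((1-p)/4 : ℝ) : ℂ) + ((p/2 : ℝ):ℂ), 0, 0, ((p/2 : ℝ):ℂ);
       0, (((1-p)/4 : ℝ) : ℂ), 0, 0;
       0, 0, (((1-p)/4 : ℝ) : ℂ), 0;
       ((p/2 : ℝ):ℂ), 0, 0, (((1-p)/4 : ℝ) : ℂ) + ((p/2 : ℝ):ℂ)] from by
    ext i j
    fin_cases i <;> fin_cases j <;>
      simp [Matrix.reindex_apply, werner_apply, finProdFinEquiv, Prod.ext_iff, Fin.divNat,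
        Fin.modNat, Fin.ext_iff, (show ((3:Fin 4):Nat)=3 from rfl),
        (show ((2:Fin 4):Nat)=2 from rfl), (show ((1:Fin 4):Nat)=1 from rfl),
        Matrix.vecHead, Matrix.vecTail] <;>
      push_cast <;> ring]
  rw [Matrix.det_succ_row_zero]
  simp [Fin.sum_univ_succ, Matrix.det_fin_three,
    (show Fin.castSucc (2:Fin 3) = (2:Fin 4) from rfl),
    (show Fin.castSucc (1:Fin 3) = (1:Fin 4) from rfl),
    (show Fin.castSucc (0:Fin 3) = (0:Fin 4) from rfl),
    (show Fin.succAbove (3:Fin 4) (2:Fin 3) = (2:Fin 4) from rfl)]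
  push_cast
  ring

/-! The explicit symmetric extension -/

def psi1 : Q3 → ℂ := fun x =>
  if x = (0,0,0) then 2 else if x = (1,0,1) then 1 else if x = (1,1,0) then 1 else 0
def psi2 : Q3 → ℂ := fun x =>
  if x = (1,1,1) then 2 else if x = (0,1,0) then 1 else if x = (0,0,1) then 1 else 0

def tau (p : ℝ) : Matrix Q3 Q3 ℂ :=
  (((2 - 3*p)/16 : ℝ) : ℂ) • (1 : Matrix Q3 Q3 ℂ) +
    ((p/8 : ℝ) : ℂ) • (proj psi1 + proj psi2)

set_option maxHeartbeats 1000000 in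
lemma tau_margB' (p : ℝ) : ptraceB'3 (tau p) = werner p := by
  ext ⟨a, b⟩ ⟨c, d⟩
  simp only [ptraceB'3, tau, Matrix.of_apply, Matrix.add_apply, Matrix.smul_apply,
    Matrix.one_apply, proj, vecMulVec_apply, Pi.star_apply, psi1, psi2, Fin.sum_univ_two,
    werner_apply, smul_eq_mul]
  fin_cases a <;> fin_cases b <;> fin_cases c <;> fin_cases d <;>
    norm_num [Prod.ext_iff, Prod.fst_zero, Prod.snd_zero, Fin.ext_iff] <;> ring

set_option maxHeartbeats 1000000 in
lemma tau_margB (p : ℝ) : ptraceB3 (tau p) = werner p := by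
  ext ⟨a, b⟩ ⟨c, d⟩
  simp only [ptraceB3, tau, Matrix.of_apply, Matrix.add_apply, Matrix.smul_apply,
    Matrix.one_apply, proj, vecMulVec_apply, Pi.star_apply, psi1, psi2, Fin.sum_univ_two,
    werner_apply, smul_eq_mul]
  fin_cases a <;> fin_cases b <;> fin_cases c <;> fin_cases d <;>
    norm_num [Prod.ext_iff, Prod.fst_zero, Prod.snd_zero, Fin.ext_iff] <;> ring

lemma tau_trace (p : ℝ) : (tau p).trace = 1 := by
  simp only [tau, Matrix.trace, Matrix.diag, Matrix.add_apply, Matrix.smul_apply,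
    Matrix.one_apply, proj, vecMulVec_apply, Pi.star_apply, psi1, psi2,
    Fintype.sum_prod_type, Fin.sum_univ_two, smul_eq_mul]
  norm_num [Prod.ext_iff, Prod.fst_zero, Prod.snd_zero, Fin.ext_iff]
  push_cast
  ring

lemma tau_state (p : ℝ) (hp0 : 0 ≤ p) (hp : p ≤ 2/3) : IsState3 (tau p) := by
  refine ⟨?_, tau_trace p⟩
  exact Matrix.PosSemidef.add
    (smul_psd (by linarith) Matrix.PosSemidef.one)
    (smul_psd (by linarith) (Matrix.PosSemidef.add (proj_psd _) (proj_psd _)))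

/-! Witness vectors for the converse direction -/

def wv1 : Q3 → ℂ := fun i => if i = (1,0,1) then 1 else if i = (1,1,0) then -1 else 0
def wv2 : Q3 → ℂ := fun i =>
  if i = (0,0,0) then 1 else if i = (1,0,1) then -1 else if i = (1,1,0) then -1 else 0
def wv3 : Q3 → ℂ := fun i => if i = (0,1,0) then 1 else if i = (0,0,1) then -1 else 0
def wv4 : Q3 → ℂ := fun i =>
  if i = (1,1,1) then 1 else if i = (0,1,0) then -1 else if i = (0,0,1) then -1 else 0
def wv5 : Q3 → ℂ := fun i => if i = (0,1,1) then 1 else 0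
def wv6 : Q3 → ℂ := fun i => if i = (1,0,0) then 1 else 0

lemma symext_bound (p : ℝ) (τ : Matrix Q3 Q3 ℂ) (hpsd : τ.PosSemidef)
    (htr : τ.trace = 1) (hB' : ptraceB'3 τ = werner p) (hB : ptraceB3 τ = werner p) :
    p ≤ 2/3 := by
  set q : (Q3 → ℂ) → ℂ := fun v => star v ⬝ᵥ τ *ᵥ v with hq_def
  have hq : ∀ v, 0 ≤ q v := hpsd.dotProduct_mulVec_nonneg
  have htr' : τ (0,0,0) (0,0,0) + τ (0,0,1) (0,0,1) + τ (0,1,0) (0,1,0) + τ (0,1,1) (0,1,1)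
      + τ (1,0,0) (1,0,0) + τ (1,0,1) (1,0,1) + τ (1,1,0) (1,1,0) + τ (1,1,1) (1,1,1) = 1 := by
    have := htr
    simp only [Matrix.trace, Matrix.diag, Fintype.sum_prod_type, Fin.sum_univ_two] at this
    linear_combination this
  have hd1 : τ (0,0,1) (0,0,1) + τ (0,1,1) (0,1,1) = (((1-p)/4 : ℝ) : ℂ) := by
    have h : ptraceB3 τ ((0:Fin 2),(1:Fin 2)) ((0:Fin 2),(1:Fin 2)) = werner p (0,1) (0,1) := by
      rw [hB]
    simpa [ptraceB3, Fin.sum_univ_two, werner_apply] using h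
  have hd2 : τ (1,0,0) (1,0,0) + τ (1,1,0) (1,1,0) = (((1-p)/4 : ℝ) : ℂ) := by
    have h : ptraceB3 τ ((1:Fin 2),(0:Fin 2)) ((1:Fin 2),(0:Fin 2)) = werner p (1,0) (1,0) := by
      rw [hB]
    simpa [ptraceB3, Fin.sum_univ_two, werner_apply] using h
  have hd3 : τ (0,1,0) (0,1,0) + τ (0,1,1) (0,1,1) = (((1-p)/4 : ℝ) : ℂ) := by
    have h : ptraceB'3 τ ((0:Fin 2),(1:Fin 2)) ((0:Fin 2),(1:Fin 2)) = werner p (0,1) (0,1) := by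
      rw [hB']
    simpa [ptraceB'3, Fin.sum_univ_two, werner_apply] using h
  have hd4 : τ (1,0,0) (1,0,0) + τ (1,0,1) (1,0,1) = (((1-p)/4 : ℝ) : ℂ) := by
    have h : ptraceB'3 τ ((1:Fin 2),(0:Fin 2)) ((1:Fin 2),(0:Fin 2)) = werner p (1,0) (1,0) := by
      rw [hB']
    simpa [ptraceB'3, Fin.sum_univ_two, werner_apply] using h
  have ho1 : τ (0,0,0) (1,0,1) + τ (0,1,0) (1,1,1) = ((p/2 : ℝ) : ℂ) := by
    have h : ptraceB3 τ ((0:Fin 2),(0:Fin 2)) ((1:Fin 2),(1:Fin 2)) = werner p (0,0) (1,1) := by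
      rw [hB]
    simpa [ptraceB3, Fin.sum_univ_two, werner_apply] using h
  have ho2 : τ (1,0,1) (0,0,0) + τ (1,1,1) (0,1,0) = ((p/2 : ℝ) : ℂ) := by
    have h : ptraceB3 τ ((1:Fin 2),(1:Fin 2)) ((0:Fin 2),(0:Fin 2)) = werner p (1,1) (0,0) := by
      rw [hB]
    simpa [ptraceB3, Fin.sum_univ_two, werner_apply] using h
  have ho3 : τ (0,0,0) (1,1,0) + τ (0,0,1) (1,1,1) = ((p/2 : ℝ) : ℂ) := by
    have h : ptraceB'3 τ ((0:Fin 2),(0:Fin 2)) ((1:Fin 2),(1:Fin 2)) = werner p (0,0) (1,1) := by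
      rw [hB']
    simpa [ptraceB'3, Fin.sum_univ_two, werner_apply] using h
  have ho4 : τ (1,1,0) (0,0,0) + τ (1,1,1) (0,0,1) = ((p/2 : ℝ) : ℂ) := by
    have h : ptraceB'3 τ ((1:Fin 2),(1:Fin 2)) ((0:Fin 2),(0:Fin 2)) = werner p (1,1) (0,0) := by
      rw [hB']
    simpa [ptraceB'3, Fin.sum_univ_two, werner_apply] using h
  have key : (4/9 : ℂ) * (q wv1 + q wv2 + q wv3 + q wv4) + (4/3) * (q wv5 + q wv6)
      = (((2 - 3*p)*(4/9) : ℝ) : ℂ) := by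
    simp only [hq_def, dotProduct, mulVec, Pi.star_apply, Fintype.sum_prod_type,
      Fin.sum_univ_two, wv1, wv2, wv3, wv4, wv5, wv6]
    push_cast at hd1 hd2 hd3 hd4 ho1 ho2 ho3 ho4 ⊢
    norm_num [Prod.ext_iff]
    linear_combination (4/9 : ℂ) * htr' + (4/9 : ℂ) * (hd1 + hd2 + hd3 + hd4)
      - (4/9 : ℂ) * (ho1 + ho2 + ho3 + ho4)
  have hpos : (0:ℂ) ≤ (4/9 : ℂ) * (q wv1 + q wv2 + q wv3 + q wv4)
      + (4/3) * (q wv5 + q wv6) := by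
    have h49 : (0:ℂ) ≤ (4/9 : ℂ) := by norm_num [Complex.le_def]
    have h43 : (0:ℂ) ≤ (4/3 : ℂ) := by norm_num [Complex.le_def]
    exact add_nonneg (mul_nonneg h49 (add_nonneg (add_nonneg (add_nonneg (hq wv1) (hq wv2))
      (hq wv3)) (hq wv4))) (mul_nonneg h43 (add_nonneg (hq wv5) (hq wv6)))
  rw [key] at hpos
  have := Complex.zero_le_real.mp hpos
  nlinarith

/-- For the Werner state: tr(ρ_W(p)²) = tr((tr_B ρ_W(p))²) + 4√(det ρ_W(p)) iff p = 2/3,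
and ρ_W(p) admits a symmetric extension iff p ≤ 2/3. -/
theorem werner_symmetric_extension (p : ℝ) (hp0 : 0 ≤ p) (hp1 : p ≤ 1) :
    (((werner p * werner p).trace).re =
        ((ptraceB2 (werner p) * ptraceB2 (werner p)).trace).re +
          4 * Real.sqrt (werner p).det.re ↔ p = 2 / 3) ∧
      (SymExt (werner p) ↔ p ≤ 2 / 3) := by
  have hD : 0 ≤ (1-p)^3*(1+3*p) := mul_nonneg (pow_nonneg (by linarith) 3) (by linarith)
  have hsqrt : Real.sqrt ((1-p)^3*(1+3*p)/256) = Real.sqrt ((1-p)^3*(1+3*p)) / 16 := by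
    rw [show (1-p)^3*(1+3*p)/256 = (1/16)^2 * ((1-p)^3*(1+3*p)) by ring,
      Real.sqrt_mul (by positivity), Real.sqrt_sq (by norm_num)]
    ring
  constructor
  · rw [trace_werner_sq, trace_ptrB2_sq, det_werner, Complex.ofReal_re, Complex.ofReal_re,
      Complex.ofReal_re, hsqrt]
    set s := Real.sqrt ((1-p)^3*(1+3*p)) with hs_def
    have hs0 : 0 ≤ s := Real.sqrt_nonneg _
    have hs2 : s^2 = (1-p)^3*(1+3*p) := Real.sq_sqrt hD
    constructor
    · intro h
      have hs : s = 3*p^2 - 1 := by linarith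
      have hppos : 0 < p := by nlinarith
      have hpoly : p^3 * (12*p - 8) = 0 := by nlinarith
      rcases mul_eq_zero.mp hpoly with h' | h'
      · exact absurd h' (pow_ne_zero 3 (ne_of_gt hppos))
      · linarith
    · intro h
      subst h
      rw [hs_def, show (1-(2/3:ℝ))^3*(1+3*(2/3)) = (1/3)^2 by norm_num,
        Real.sqrt_sq (by norm_num)]
      norm_num
  · constructor
    · rintro ⟨τ, ⟨hpsd, htr⟩, hB', hB⟩
      exact symext_bound p τ hpsd htr hB' hB
    · intro hp
      exact ⟨tau p, tau_state p hp0 hp, tau_margB' p, tau_margB p⟩
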